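/- Let p be an odd prime, let q be a positive divisor of p−1, and let χ be a non-principal Dirichlet character modulo p with complex values. Then |Σ_{1≤m≤p−1, gcd(m,(p−1)/q)=1} χ(m)| ≤ 2^{ω((p−1)/q)} · √p · log p. -/

import Mathlib

open Finset Real


lemma my_exp_le {x : ℝ} (h0 : 0 ≤ x) (h1 : x ≤ 1) :
    Real.exp x ≤ 1 + x + x ^ 2 / 2 + x ^ 3 / 4 := by
  have h := Real.exp_bound' h0 h1 (n := 3) (by norm_num)
  have h3 : (∑ m ∈ Finset.range 3, x ^ m / m.factorial) = 1 + x + x ^ 2 / 2 := by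
    simp [Finset.sum_range_succ, Nat.factorial]
  rw [h3] at h
  norm_num [Nat.factorial] at h
  nlinarith [pow_nonneg h0 3]

lemma my_harmonic (m : ℕ) : ∑ a ∈ Icc 1 m, (a : ℝ)⁻¹ ≤ Real.log (2 * m + 1) := by
  induction m with
  | zero => simp
  | succ n ih =>
      rw [Finset.sum_Icc_succ_top (by norm_num)]
      have key : ((n:ℝ) + 1)⁻¹ ≤ Real.log (2 * (n+1) + 1) - Real.log (2 * n + 1) := by
        have hpos : (0:ℝ) < 2 * n + 1 := by positivity
        have hx0 : (0:ℝ) ≤ ((n:ℝ)+1)⁻¹ := by positivity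
        have hx1 : ((n:ℝ)+1)⁻¹ ≤ 1 := by
          rw [inv_le_one_iff₀]; right; linarith [Nat.cast_nonneg (α := ℝ) n]
        set x : ℝ := ((n:ℝ)+1)⁻¹ with hxdef
        have hxpos : 0 < x := by positivity
        have hexp : Real.exp x ≤ (2 * (n:ℝ) + 3) / (2 * n + 1) := by
          have h := my_exp_le hx0 hx1
          have hfrac : 1 + x + x ^ 2 / 2 + x ^ 3 / 4 ≤ (2 + x) / (2 - x) := by
            rw [le_div_iff₀ (by linarith)]
            nlinarith [pow_nonneg hx0 4]
          have hxeq : (2 + x) / (2 - x) = (2 * (n:ℝ) + 3) / (2 * n + 1) := by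
            have hn1 : ((n:ℝ) + 1) ≠ 0 := by positivity
            rw [hxdef, div_eq_div_iff (by rw [← hxdef]; linarith) (by positivity)]
            field_simp
            ring
          linarith [hfrac.trans_eq hxeq]
        have hl := Real.log_le_log (Real.exp_pos x) hexp
        rw [Real.log_exp, Real.log_div (by positivity) (by positivity)] at hl
        have : x ≤ Real.log (2 * (n:ℝ) + 3) - Real.log (2 * n + 1) := hl
        convert this using 2
        push_cast; ring
      push_cast
      push_cast at ih
      linarith


lemma my_geom (z : ℂ) (hz : ‖z‖ = 1) (hz1 : z ≠ 1) (N : ℕ) :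
    ‖∑ k ∈ Icc 1 N, z ^ k‖ ≤ 2 / ‖z - 1‖ := by
  have hsub : z - 1 ≠ 0 := sub_ne_zero.mpr hz1
  have heq : ∑ k ∈ Icc 1 N, z ^ k = z * ((z ^ N - 1) / (z - 1)) := by
    rw [← geom_sum_eq hz1, Finset.mul_sum]
    rw [show Icc 1 N = Finset.map ⟨Nat.succ, Nat.succ_injective⟩ (Finset.range N) by
      ext x
      simp only [mem_Icc, Finset.mem_map, Function.Embedding.coeFn_mk, Finset.mem_range]
      constructor
      · rintro ⟨h1, h2⟩; exact ⟨x - 1, by omega, by omega⟩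
      · rintro ⟨a, ha, rfl⟩; omega]
    rw [Finset.sum_map]
    refine Finset.sum_congr rfl fun i _ => ?_
    simp only [Function.Embedding.coeFn_mk, Nat.succ_eq_add_one, pow_succ]
    ring
  rw [heq, norm_mul, hz, one_mul, norm_div]
  have hnum : ‖z ^ N - 1‖ ≤ 2 := by
    calc ‖z ^ N - 1‖ ≤ ‖z ^ N‖ + ‖(1:ℂ)‖ := by
          simpa using norm_sub_le (z ^ N) 1
      _ ≤ 2 := by simp [norm_pow, hz]; norm_num
  gcongr

lemma my_abs_exp (θ : ℝ) :
    ‖Complex.exp (θ * Complex.I) - 1‖ = 2 * |Real.sin (θ / 2)| := by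
  rw [Complex.exp_mul_I]
  have : Complex.cos θ + Complex.sin θ * Complex.I - 1
      = ((Real.cos θ - 1 : ℝ) : ℂ) + ((Real.sin θ : ℝ) : ℂ) * Complex.I := by
    push_cast [Complex.ofReal_cos, Complex.ofReal_sin]; ring
  rw [this, Complex.norm_add_mul_I]
  have hid : (Real.cos θ - 1) ^ 2 + Real.sin θ ^ 2 = (2 * |Real.sin (θ / 2)|) ^ 2 := by
    have h1 := Real.sin_sq_add_cos_sq θ
    have h2 : Real.cos θ = 1 - 2 * Real.sin (θ / 2) ^ 2 := by
      have hc := Real.cos_two_mul (θ / 2)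
      have hs := Real.sin_sq_add_cos_sq (θ / 2)
      rw [show 2 * (θ/2) = θ by ring] at hc
      nlinarith
    rw [mul_pow, sq_abs]
    nlinarith
  rw [hid, Real.sqrt_sq (by positivity)]


lemma my_gauss_abs {p : ℕ} [Fact p.Prime] (χ : DirichletCharacter ℂ p) (hχ : χ ≠ 1) :
    ‖gaussSum χ ZMod.stdAddChar‖ = Real.sqrt p := by
  have hconj : (starRingEnd ℂ) (gaussSum χ ZMod.stdAddChar)
      = gaussSum χ⁻¹ (ZMod.stdAddChar)⁻¹ := by
    rw [gaussSum, gaussSum, map_sum]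
    refine Finset.sum_congr rfl fun b _ => ?_
    rw [map_mul]
    congr 1
    · exact MulChar.star_apply' χ b
    · rw [AddChar.inv_apply, ZMod.stdAddChar_apply, ZMod.stdAddChar_apply,
        AddChar.map_neg_eq_inv, Circle.coe_inv_eq_conj]
  have hcard : gaussSum χ ZMod.stdAddChar * (starRingEnd ℂ) (gaussSum χ ZMod.stdAddChar)
      = (p : ℂ) := by
    rw [hconj, gaussSum_mul_gaussSum_eq_card hχ (ZMod.isPrimitive_stdAddChar p)]
    simp [ZMod.card]
  have := congrArg (‖·‖) hcard
  rw [norm_mul, Complex.norm_conj] at this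
  have habs : ‖gaussSum χ ZMod.stdAddChar‖ ^ 2 = p := by
    rw [sq, this]
    simp
  rw [← habs, Real.sqrt_sq (by positivity)]

lemma my_pv {p : ℕ} [Fact p.Prime] (hp2 : p ≠ 2) (χ : DirichletCharacter ℂ p) (hχ : χ ≠ 1)
    (N : ℕ) :
    ‖∑ k ∈ Icc 1 N, χ (k : ZMod p)‖ ≤ Real.sqrt p * Real.log p := by
  have hp : p.Prime := Fact.out
  obtain ⟨m, hm⟩ : ∃ m, p = 2 * m + 1 := by
    rcases hp.odd_of_ne_two hp2 with ⟨m, h⟩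
    exact ⟨m, by omega⟩
  have hm1 : 1 ≤ m := by have := hp.two_le; omega
  have hppos : (0:ℝ) < p := by exact_mod_cast hp.pos
  have hχinv : χ⁻¹ ≠ 1 := by simpa [inv_eq_one] using hχ
  set ψ : AddChar (ZMod p) ℂ := ZMod.stdAddChar with hψdef
  set g : ℂ := gaussSum χ⁻¹ ψ with hgdef
  have hg : ‖g‖ = Real.sqrt p := my_gauss_abs χ⁻¹ hχinv
  -- the key identity
  have key : ∀ x : ZMod p, χ x * g = ∑ b : ZMod p, χ⁻¹ b * ψ (x * b) := by
    intro x
    by_cases hx : IsUnit x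
    · obtain ⟨u, rfl⟩ := hx
      have h := gaussSum_mulShift χ⁻¹ ψ u
      have hne : χ ↑u ≠ 0 := by
        have h1 := DirichletCharacter.unit_norm_eq_one χ u
        intro h0; rw [h0] at h1; simp at h1
      calc χ ↑u * g = χ ↑u * (χ⁻¹ ↑u * gaussSum χ⁻¹ (ψ.mulShift ↑u)) := by rw [h]
        _ = (χ ↑u * (χ ↑u)⁻¹) * gaussSum χ⁻¹ (ψ.mulShift ↑u) := by
            rw [MulChar.inv_apply_eq_inv']; ring
        _ = gaussSum χ⁻¹ (ψ.mulShift ↑u) := by rw [mul_inv_cancel₀ hne, one_mul]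
        _ = ∑ b : ZMod p, χ⁻¹ b * ψ (↑u * b) := by
            rw [gaussSum]
            exact Finset.sum_congr rfl fun b _ => by rw [AddChar.mulShift_apply]
    · have hx0 : x = 0 := by
        by_contra h0
        exact hx (isUnit_iff_ne_zero.mpr h0)
      subst hx0
      rw [MulChar.map_nonunit χ hx, zero_mul]
      symm
      calc ∑ b : ZMod p, χ⁻¹ b * ψ (0 * b) = ∑ b : ZMod p, χ⁻¹ b := by
            refine Finset.sum_congr rfl fun b _ => ?_
            rw [zero_mul, AddChar.map_zero_eq_one, mul_one]
        _ = 0 := MulChar.sum_eq_zero_of_ne_one hχinv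
  have hTg : (∑ k ∈ Icc 1 N, χ (k : ZMod p)) * g
      = ∑ b : ZMod p, χ⁻¹ b * ∑ k ∈ Icc 1 N, (ψ b) ^ k := by
    rw [Finset.sum_mul]
    have heach : ∀ k ∈ Icc 1 N, χ (k : ZMod p) * g = ∑ b : ZMod p, χ⁻¹ b * (ψ b) ^ k := by
      intro k _
      rw [key]
      refine Finset.sum_congr rfl fun b _ => ?_
      congr 1
      rw [show ((k : ZMod p) * b) = k • b by rw [nsmul_eq_mul], AddChar.map_nsmul_eq_pow]
    rw [Finset.sum_congr rfl heach, Finset.sum_comm]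
    exact Finset.sum_congr rfl fun b _ => by rw [Finset.mul_sum]
  -- bound each nonzero term
  have hterm : ∀ b : ZMod p, b ≠ 0 →
      ‖χ⁻¹ b * ∑ k ∈ Icc 1 N, (ψ b) ^ k‖ ≤ (Real.sin (π * b.val / p))⁻¹ := by
    intro b hb
    have hval1 : 1 ≤ b.val := Nat.one_le_iff_ne_zero.mpr fun h => hb ((ZMod.val_eq_zero b).mp h)
    have hvalp : b.val < p := ZMod.val_lt b
    have hvr : (b.val : ℝ) < p := by exact_mod_cast hvalp
    have hvr1 : (1:ℝ) ≤ b.val := by exact_mod_cast hval1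
    have habs1 : ‖ψ b‖ = 1 := by
      rw [hψdef, ZMod.stdAddChar_apply]; exact Circle.norm_coe _
    have hne1 : ψ b ≠ 1 := by
      intro h
      apply hb
      apply ZMod.injective_stdAddChar (N := p)
      rw [AddChar.map_zero_eq_one]
      exact h
    have hsinpos : 0 < Real.sin (π * b.val / p) := by
      apply Real.sin_pos_of_pos_of_lt_pi
      · have := Real.pi_pos; positivity
      · rw [div_lt_iff₀ hppos]
        have := Real.pi_pos
        nlinarith
    have hzabs : ‖ψ b - 1‖ = 2 * Real.sin (π * b.val / p) := by
      have : ψ b = Complex.exp ((2 * π * b.val / p : ℝ) * Complex.I) := by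
        rw [hψdef, ZMod.stdAddChar_apply, ZMod.toCircle_apply]
        congr 1
        push_cast
        ring
      rw [this, my_abs_exp]
      rw [show (2 * π * (b.val:ℝ) / p) / 2 = π * b.val / p by ring, abs_of_pos hsinpos]
    have hgeo := my_geom (ψ b) habs1 hne1 N
    calc ‖χ⁻¹ b * ∑ k ∈ Icc 1 N, (ψ b) ^ k‖
        = ‖χ⁻¹ b‖ * ‖∑ k ∈ Icc 1 N, (ψ b) ^ k‖ := norm_mul _ _
      _ ≤ 1 * (2 / ‖ψ b - 1‖) := by
          apply mul_le_mul ?_ hgeo (by positivity) zero_le_one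
          exact DirichletCharacter.norm_le_one χ⁻¹ b
      _ = 2 / (2 * Real.sin (π * b.val / p)) := by rw [one_mul, hzabs]
      _ = (Real.sin (π * b.val / p))⁻¹ := by
          rw [inv_eq_one_div, div_eq_div_iff (by positivity) hsinpos.ne']
          ring
  -- sum the bounds over b ≠ 0
  have hzero : ‖(χ⁻¹ (0 : ZMod p)) * ∑ k ∈ Icc 1 N, (ψ (0:ZMod p)) ^ k‖ = 0 := by
    rw [MulChar.map_nonunit χ⁻¹ not_isUnit_zero, zero_mul, norm_zero]
  have hsum1 : ‖∑ b : ZMod p, χ⁻¹ b * ∑ k ∈ Icc 1 N, (ψ b) ^ k‖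
      ≤ ∑ v ∈ Icc 1 (p - 1), (Real.sin (π * v / p))⁻¹ := by
    have hbij : ∑ b ∈ Finset.univ.erase (0 : ZMod p), (Real.sin (π * b.val / p))⁻¹
        = ∑ v ∈ Icc 1 (p - 1), (Real.sin (π * v / p))⁻¹ := by
      refine Finset.sum_nbij' (i := fun b => b.val) (j := fun v => (v : ZMod p))
        ?_ ?_ ?_ ?_ ?_
      · intro b hb
        have hb0 : b ≠ 0 := (Finset.mem_erase.mp hb).1
        have := ZMod.val_lt b
        have : 1 ≤ b.val := Nat.one_le_iff_ne_zero.mpr fun h => hb0 ((ZMod.val_eq_zero b).mp h)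
        simp only [Finset.mem_Icc]
        omega
      · intro v hv
        rw [Finset.mem_Icc] at hv
        have hvp : v < p := by omega
        refine Finset.mem_erase.mpr ⟨?_, Finset.mem_univ _⟩
        intro h0
        have h1 := ZMod.val_natCast_of_lt hvp
        rw [show ((v:ℕ) : ZMod p) = 0 from h0, ZMod.val_zero] at h1
        omega
      · intro b _
        exact ZMod.natCast_zmod_val b
      · intro v hv
        rw [Finset.mem_Icc] at hv
        exact ZMod.val_natCast_of_lt (by omega)
      · intro b _
        rfl
    calc ‖∑ b : ZMod p, χ⁻¹ b * ∑ k ∈ Icc 1 N, (ψ b) ^ k‖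
        ≤ ∑ b : ZMod p, ‖χ⁻¹ b * ∑ k ∈ Icc 1 N, (ψ b) ^ k‖ :=
          norm_sum_le _ _
      _ = ∑ b ∈ Finset.univ.erase (0 : ZMod p),
            ‖χ⁻¹ b * ∑ k ∈ Icc 1 N, (ψ b) ^ k‖ :=
          (Finset.sum_erase (f := fun b : ZMod p =>
            ‖χ⁻¹ b * ∑ k ∈ Icc 1 N, (ψ b) ^ k‖) Finset.univ hzero).symm
      _ ≤ ∑ b ∈ Finset.univ.erase (0 : ZMod p), (Real.sin (π * b.val / p))⁻¹ :=
          Finset.sum_le_sum fun b hb => hterm b (Finset.mem_erase.mp hb).1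
      _ = ∑ v ∈ Icc 1 (p - 1), (Real.sin (π * v / p))⁻¹ := hbij
  -- the real estimate
  have hlogp : Real.log (2 * (m:ℝ) + 1) = Real.log p := by
    congr 1
    rw [hm]
    push_cast
    ring
  have hhalf : ∑ v ∈ Ioc 0 m, (Real.sin (π * v / p))⁻¹ ≤ (p / 2) * Real.log p := by
    have hstep : ∀ v ∈ Ioc 0 m, (Real.sin (π * v / p))⁻¹ ≤ (p / 2) * (v:ℝ)⁻¹ := by
      intro v hv
      rw [Finset.mem_Ioc] at hv
      have hv1 : (1:ℝ) ≤ v := by exact_mod_cast hv.1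
      have hvm : (v:ℝ) ≤ m := by exact_mod_cast hv.2
      have hx0 : (0:ℝ) ≤ π * v / p := by positivity
      have hx2 : π * v / p ≤ π / 2 := by
        rw [div_le_div_iff₀ hppos (by norm_num : (0:ℝ) < 2)]
        have hpm : 2 * (v:ℝ) ≤ p := by
          rw [hm]; push_cast; linarith
        nlinarith [Real.pi_pos]
      have hjordan : 2 * (v:ℝ) / p ≤ Real.sin (π * v / p) := by
        have := Real.mul_le_sin hx0 hx2
        have hπ : π ≠ 0 := Real.pi_ne_zero
        calc 2 * (v:ℝ) / p = 2 / π * (π * v / p) := by field_simp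
          _ ≤ Real.sin (π * v / p) := this
      have hpos2 : (0:ℝ) < 2 * v / p := by positivity
      calc (Real.sin (π * v / p))⁻¹ ≤ (2 * (v:ℝ) / p)⁻¹ :=
            inv_anti₀ hpos2 hjordan
        _ = (p / 2) * (v:ℝ)⁻¹ := by
            rw [inv_div]
            field_simp
    calc ∑ v ∈ Ioc 0 m, (Real.sin (π * v / p))⁻¹
        ≤ ∑ v ∈ Ioc 0 m, (p / 2) * (v:ℝ)⁻¹ := Finset.sum_le_sum hstep
      _ = (p / 2) * ∑ v ∈ Icc 1 m, (v:ℝ)⁻¹ := by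
          rw [← Finset.mul_sum, ← Finset.Icc_add_one_left_eq_Ioc, zero_add]
      _ ≤ (p / 2) * Real.log (2 * m + 1) := by
          have h0 : (0:ℝ) ≤ p / 2 := by positivity
          exact mul_le_mul_of_nonneg_left (my_harmonic m) h0
      _ = (p / 2) * Real.log p := by rw [hlogp]
  have hreal : ∑ v ∈ Icc 1 (p - 1), (Real.sin (π * v / p))⁻¹ ≤ p * Real.log p := by
    have hp1 : p - 1 = 2 * m := by omega
    have hIcc : Icc 1 (p - 1) = Ioc 0 (2 * m) := by rw [hp1, ← Finset.Icc_add_one_left_eq_Ioc, zero_add]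
    rw [hIcc, ← Finset.sum_Ioc_consecutive _ (Nat.zero_le m) (by omega : m ≤ 2 * m)]
    have hsecond : ∑ v ∈ Ioc m (2 * m), (Real.sin (π * v / p))⁻¹
        = ∑ v ∈ Ioc 0 m, (Real.sin (π * v / p))⁻¹ := by
      refine Finset.sum_nbij' (i := fun v => 2 * m + 1 - v) (j := fun v => 2 * m + 1 - v)
        ?_ ?_ ?_ ?_ ?_
      · intro v hv
        rw [Finset.mem_Ioc] at hv
        show 2 * m + 1 - v ∈ Ioc 0 m
        rw [Finset.mem_Ioc]
        omega
      · intro v hv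
        rw [Finset.mem_Ioc] at hv
        show 2 * m + 1 - v ∈ Ioc m (2 * m)
        rw [Finset.mem_Ioc]
        omega
      · intro v hv
        rw [Finset.mem_Ioc] at hv
        show 2 * m + 1 - (2 * m + 1 - v) = v
        omega
      · intro v hv
        rw [Finset.mem_Ioc] at hv
        show 2 * m + 1 - (2 * m + 1 - v) = v
        omega
      · intro v hv
        rw [Finset.mem_Ioc] at hv
        have hcast : ((2 * m + 1 - v : ℕ) : ℝ) = (p:ℝ) - v := by
          have hvle : v ≤ 2 * m + 1 := by omega
          rw [hm]
          push_cast [hvle]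
          ring
        rw [hcast, show π * ((p:ℝ) - v) / p = π - π * v / p by field_simp,
          Real.sin_pi_sub]
    rw [hsecond]
    calc ∑ v ∈ Ioc 0 m, (Real.sin (π * v / p))⁻¹ + ∑ v ∈ Ioc 0 m, (Real.sin (π * v / p))⁻¹
        ≤ (p / 2) * Real.log p + (p / 2) * Real.log p := add_le_add hhalf hhalf
      _ = p * Real.log p := by ring
  -- conclude
  have hfinal : ‖∑ k ∈ Icc 1 N, χ (k : ZMod p)‖ * Real.sqrt p
      ≤ p * Real.log p := by
    rw [← hg, ← norm_mul, hTg]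
    exact hsum1.trans hreal
  have hsq : Real.sqrt p * Real.sqrt p = p := Real.mul_self_sqrt hppos.le
  have hs : 0 < Real.sqrt p := Real.sqrt_pos.mpr hppos
  refine le_of_mul_le_mul_right ?_ hs
  calc ‖∑ k ∈ Icc 1 N, χ (k : ZMod p)‖ * Real.sqrt p
      ≤ p * Real.log p := hfinal
    _ = Real.sqrt p * Real.log p * Real.sqrt p := by linear_combination Real.log p * hsq.symm

theorem stmt8 (p q : ℕ) [Fact p.Prime] (hp2 : p ≠ 2) (hq : 0 < q) (hdvd : q ∣ p - 1)
    (χ : DirichletCharacter ℂ p) (hχ : χ ≠ 1) :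
    ‖∑ m ∈ (Finset.Icc 1 (p - 1)).filter (fun m => Nat.gcd m ((p - 1) / q) = 1),
        χ (m : ZMod p)‖
      ≤ 2 ^ ((p - 1) / q).primeFactors.card * Real.sqrt p * Real.log p := by
  have hp : p.Prime := Fact.out
  set d : ℕ := (p - 1) / q with hd
  have hp3 : 3 ≤ p := by
    have := hp.two_le
    rcases Nat.lt_or_ge p 3 with h | h
    · interval_cases p <;> simp_all
    · exact h
  have hdpos : 0 < d := Nat.div_pos (Nat.le_of_dvd (by omega) hdvd) hq
  -- Möbius identity for the coprimality indicator
  have hmoeb : ∀ m : ℕ, 0 < m →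
      (if Nat.gcd m d = 1 then (1:ℂ) else 0)
        = ∑ e ∈ d.divisors, if e ∣ m then ((ArithmeticFunction.moebius e : ℤ) : ℂ) else 0 := by
    intro m hm
    have h1 : ∑ e ∈ (Nat.gcd m d).divisors, ArithmeticFunction.moebius e
        = if Nat.gcd m d = 1 then 1 else 0 := by
      have h2 : (ArithmeticFunction.moebius * ↑ArithmeticFunction.zeta : ArithmeticFunction ℤ)
          (Nat.gcd m d) = (1 : ArithmeticFunction ℤ) (Nat.gcd m d) := by
        rw [ArithmeticFunction.moebius_mul_coe_zeta]
      rwa [ArithmeticFunction.coe_mul_zeta_apply, ArithmeticFunction.one_apply] at h2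
    have hsum : ∑ e ∈ (Nat.gcd m d).divisors, ((ArithmeticFunction.moebius e : ℤ) : ℂ)
        = if Nat.gcd m d = 1 then 1 else 0 := by
      calc ∑ e ∈ (Nat.gcd m d).divisors, ((ArithmeticFunction.moebius e : ℤ) : ℂ)
          = ((∑ e ∈ (Nat.gcd m d).divisors, ArithmeticFunction.moebius e : ℤ) : ℂ) := by
            push_cast
            rfl
        _ = ((if Nat.gcd m d = 1 then 1 else 0 : ℤ) : ℂ) := by rw [h1]
        _ = if Nat.gcd m d = 1 then 1 else 0 := by split_ifs <;> simp
    have hset : (Nat.gcd m d).divisors = d.divisors.filter (fun e => e ∣ m) := by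
      ext e
      simp only [Nat.mem_divisors, Finset.mem_filter]
      constructor
      · rintro ⟨he, _⟩
        exact ⟨⟨he.trans (Nat.gcd_dvd_right m d), hdpos.ne'⟩, he.trans (Nat.gcd_dvd_left m d)⟩
      · rintro ⟨⟨hed, _⟩, hem⟩
        exact ⟨Nat.dvd_gcd hem hed, (Nat.gcd_pos_of_pos_right m hdpos).ne'⟩
    rw [← hsum, hset, Finset.sum_filter]
  -- swap sums
  have hswap : ∑ m ∈ (Finset.Icc 1 (p - 1)).filter (fun m => Nat.gcd m d = 1), χ (m : ZMod p)
      = ∑ e ∈ d.divisors, ((ArithmeticFunction.moebius e : ℤ) : ℂ)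
          * ∑ k ∈ Icc 1 ((p - 1) / e), χ ((e * k : ℕ) : ZMod p) := by
    rw [Finset.sum_filter]
    have hpt : ∀ m ∈ Icc 1 (p - 1), (if Nat.gcd m d = 1 then χ (m : ZMod p) else 0)
        = ∑ e ∈ d.divisors, if e ∣ m then
            ((ArithmeticFunction.moebius e : ℤ) : ℂ) * χ (m : ZMod p) else 0 := by
      intro m hm
      rw [Finset.mem_Icc] at hm
      calc (if Nat.gcd m d = 1 then χ (m : ZMod p) else 0)
          = (if Nat.gcd m d = 1 then (1:ℂ) else 0) * χ (m : ZMod p) := by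
            split_ifs <;> simp
        _ = (∑ e ∈ d.divisors, if e ∣ m then
              ((ArithmeticFunction.moebius e : ℤ) : ℂ) else 0) * χ (m : ZMod p) := by
            rw [← hmoeb m (by omega)]
        _ = ∑ e ∈ d.divisors, (if e ∣ m then
              ((ArithmeticFunction.moebius e : ℤ) : ℂ) else 0) * χ (m : ZMod p) :=
            Finset.sum_mul _ _ _
        _ = ∑ e ∈ d.divisors, if e ∣ m then
              ((ArithmeticFunction.moebius e : ℤ) : ℂ) * χ (m : ZMod p) else 0 := by
            refine Finset.sum_congr rfl fun e _ => ?_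
            split_ifs <;> simp
    rw [Finset.sum_congr rfl hpt, Finset.sum_comm]
    refine Finset.sum_congr rfl fun e he => ?_
    have hepos : 0 < e := Nat.pos_of_mem_divisors he
    have hinner : ∑ m ∈ (Icc 1 (p - 1)).filter (fun m => e ∣ m), χ (m : ZMod p)
        = ∑ k ∈ Icc 1 ((p - 1) / e), χ ((e * k : ℕ) : ZMod p) := by
      refine Finset.sum_nbij' (i := fun m => m / e) (j := fun k => e * k) ?_ ?_ ?_ ?_ ?_
      · intro m hm
        simp only [Finset.mem_filter, Finset.mem_Icc] at hm
        obtain ⟨⟨h1, h2⟩, hdvd'⟩ := hm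
        simp only [Finset.mem_Icc]
        exact ⟨(Nat.one_le_div_iff hepos).mpr (Nat.le_of_dvd (by omega) hdvd'),
          Nat.div_le_div_right h2⟩
      · intro k hk
        simp only [Finset.mem_Icc] at hk
        simp only [Finset.mem_filter, Finset.mem_Icc]
        refine ⟨⟨?_, ?_⟩, dvd_mul_right e k⟩
        · exact Nat.one_le_iff_ne_zero.mpr (Nat.mul_ne_zero hepos.ne' (by omega))
        · have h := (Nat.le_div_iff_mul_le hepos).mp hk.2
          rwa [mul_comm] at h
      · intro m hm
        simp only [Finset.mem_filter] at hm
        exact Nat.mul_div_cancel' hm.2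
      · intro k _
        exact Nat.mul_div_cancel_left k hepos
      · intro m hm
        simp only [Finset.mem_filter] at hm
        rw [Nat.mul_div_cancel' hm.2]
    rw [← Finset.sum_filter, ← hinner, Finset.mul_sum]
  -- counting squarefree divisors
  have hcard : (d.divisors.filter (fun e => Squarefree e)).card = 2 ^ d.primeFactors.card := by
    calc (d.divisors.filter (fun e => Squarefree e)).card
        = ∑ e ∈ d.divisors.filter (fun e => Squarefree e), 1 := by
          rw [Finset.card_eq_sum_ones]
      _ = ∑ t ∈ (UniqueFactorizationMonoid.normalizedFactors d).toFinset.powerset, 1 :=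
          Nat.sum_divisors_filter_squarefree hdpos.ne'
      _ = (UniqueFactorizationMonoid.normalizedFactors d).toFinset.powerset.card :=
          (Finset.card_eq_sum_ones _).symm
      _ = 2 ^ (UniqueFactorizationMonoid.normalizedFactors d).toFinset.card :=
          Finset.card_powerset _
      _ = 2 ^ d.primeFactors.card := by rw [Nat.factors_eq, List.toFinset_coe, Nat.toFinset_factors]
  -- bound each term
  have hlog0 : 0 ≤ Real.log p := Real.log_nonneg (by exact_mod_cast hp.one_lt.le)
  have hsl0 : 0 ≤ Real.sqrt p * Real.log p := mul_nonneg (Real.sqrt_nonneg p) hlog0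
  have hbound : ∀ e ∈ d.divisors,
      ‖((ArithmeticFunction.moebius e : ℤ) : ℂ)
          * ∑ k ∈ Icc 1 ((p - 1) / e), χ ((e * k : ℕ) : ZMod p)‖
        ≤ (if Squarefree e then (1:ℝ) else 0) * (Real.sqrt p * Real.log p) := by
    intro e he
    rw [norm_mul]
    by_cases hsq : Squarefree e
    · rw [if_pos hsq]
      have h1 : ‖((ArithmeticFunction.moebius e : ℤ) : ℂ)‖ = 1 := by
        rw [Complex.norm_intCast]
        have := ArithmeticFunction.abs_moebius_eq_one_of_squarefree hsq
        rw [show ((ArithmeticFunction.moebius e : ℤ) : ℝ) = ((ArithmeticFunction.moebius e : ℤ) : ℝ) from rfl]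
        rw [← Int.cast_abs, this]
        norm_num
      have h2 : ‖∑ k ∈ Icc 1 ((p - 1) / e), χ ((e * k : ℕ) : ZMod p)‖
          ≤ Real.sqrt p * Real.log p := by
        have hfact : ∑ k ∈ Icc 1 ((p - 1) / e), χ ((e * k : ℕ) : ZMod p)
            = χ (e : ZMod p) * ∑ k ∈ Icc 1 ((p - 1) / e), χ (k : ZMod p) := by
          rw [Finset.mul_sum]
          refine Finset.sum_congr rfl fun k _ => ?_
          rw [Nat.cast_mul, map_mul]
        rw [hfact, norm_mul]
        calc ‖χ (e : ZMod p)‖ * ‖∑ k ∈ Icc 1 ((p-1)/e), χ (k : ZMod p)‖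
            ≤ 1 * (Real.sqrt p * Real.log p) := by
              apply mul_le_mul (DirichletCharacter.norm_le_one χ _)
                (my_pv hp2 χ hχ ((p-1)/e)) (norm_nonneg _) zero_le_one
          _ = Real.sqrt p * Real.log p := one_mul _
      calc ‖((ArithmeticFunction.moebius e : ℤ) : ℂ)‖
            * ‖∑ k ∈ Icc 1 ((p - 1) / e), χ ((e * k : ℕ) : ZMod p)‖
          ≤ 1 * (Real.sqrt p * Real.log p) := by
            rw [h1, one_mul]
            simpa using h2
        _ = 1 * (Real.sqrt p * Real.log p) := rfl
    · rw [if_neg hsq, ArithmeticFunction.moebius_eq_zero_of_not_squarefree hsq]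
      simp
  -- put it together
  calc ‖∑ m ∈ (Finset.Icc 1 (p - 1)).filter (fun m => Nat.gcd m d = 1),
        χ (m : ZMod p)‖
      = ‖∑ e ∈ d.divisors, ((ArithmeticFunction.moebius e : ℤ) : ℂ)
          * ∑ k ∈ Icc 1 ((p - 1) / e), χ ((e * k : ℕ) : ZMod p)‖ := by rw [hswap]
    _ ≤ ∑ e ∈ d.divisors, ‖((ArithmeticFunction.moebius e : ℤ) : ℂ)
          * ∑ k ∈ Icc 1 ((p - 1) / e), χ ((e * k : ℕ) : ZMod p)‖ := norm_sum_le _ _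
    _ ≤ ∑ e ∈ d.divisors, (if Squarefree e then (1:ℝ) else 0) * (Real.sqrt p * Real.log p) :=
        Finset.sum_le_sum hbound
    _ = (∑ e ∈ d.divisors, if Squarefree e then (1:ℝ) else 0) * (Real.sqrt p * Real.log p) :=
        (Finset.sum_mul _ _ _).symm
    _ = ((d.divisors.filter (fun e => Squarefree e)).card : ℝ) * (Real.sqrt p * Real.log p) := by
        rw [Finset.sum_boole]
    _ = 2 ^ d.primeFactors.card * (Real.sqrt p * Real.log p) := by
        rw [hcard]
        push_cast
        ring
    _ = 2 ^ d.primeFactors.card * Real.sqrt p * Real.log p := by ring
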